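/- For every real number q > 1 (in particular for every prime power q), the sequences ν₊ and ν₋ defined by ν₊(k) := π_sym(k)·(1 − q^k/2) and ν₋(k) := π_sym(k)·(−q)^k lie in ℓ²(π_sym) and are eigenvectors of P_sym: for all l ≥ 0, ν₊(l−1)P_sym(l−1,l) + ν₊(l)P_sym(l,l) + ν₊(l+1)P_sym(l+1,l) = q^{−1}·ν₊(l) and ν₋(l−1)P_sym(l−1,l) + ν₋(l)P_sym(l,l) + ν₋(l+1)P_sym(l+1,l) = −q^{−1}·ν₋(l) (the l−1 terms being omitted when l = 0). -/
import Mathlib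


noncomputable section

/-- The tridiagonal transition matrix `P_sym` for the symmetric-matrix Markov chain. -/
def Psym (q : ℝ) (i j : ℕ) : ℝ :=
  if j = i + 1 then q⁻¹ ^ (i + 1)
  else if j = i then q⁻¹ ^ i - q⁻¹ ^ (i + 1)
  else if i = j + 1 then 1 - q⁻¹ ^ i
  else 0

/-- `α(q) = ∏_{i ≥ 1, i odd} (1 − q^{-i})`. -/
def alphaQ (q : ℝ) : ℝ := ∏' i : ℕ, (1 - q⁻¹ ^ (2 * i + 1))

/-- The stationary distribution `π_sym(k) = α(q)/∏_{i=1}^{k}(q^i − 1)`. -/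
def piSym (q : ℝ) (k : ℕ) : ℝ := alphaQ q / ∏ i ∈ Finset.range k, (q ^ (i + 1) - 1)

/-- `ν₊(k) = π_sym(k)·(1 − q^k/2)`. -/
def nuPlus (q : ℝ) (k : ℕ) : ℝ := piSym q k * (1 - q ^ k / 2)

/-- `ν₋(k) = π_sym(k)·(−q)^k`. -/
def nuMinus (q : ℝ) (k : ℕ) : ℝ := piSym q k * (-q) ^ k

/-- The denominator product `∏_{i=1}^{k}(q^i − 1)`. -/
def Dq (q : ℝ) (k : ℕ) : ℝ := ∏ i ∈ Finset.range k, (q ^ (i + 1) - 1)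

lemma Dq_pos {q : ℝ} (hq : 1 < q) (k : ℕ) : 0 < Dq q k :=
  Finset.prod_pos fun i _ => sub_pos.mpr (one_lt_pow₀ hq (Nat.succ_ne_zero i))

lemma summable_majorant {q : ℝ} (hq : 1 < q) :
    Summable (fun k : ℕ => q ^ (2 * k) / Dq q k) := by
  have hq0 : (0:ℝ) < q := lt_trans one_pos hq
  apply summable_of_ratio_norm_eventually_le (r := 1/2) (by norm_num)
  have h := (tendsto_pow_atTop_atTop_of_one_lt hq).eventually_ge_atTop (2 * q ^ 2 + 1)
  filter_upwards [h] with n hn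
  have hDn := Dq_pos hq n
  have hq2 : 2 * q ^ 2 ≤ q ^ (n + 1) - 1 := by
    have h1 : q ^ n ≤ q ^ (n + 1) := pow_le_pow_right₀ hq.le (Nat.le_succ n)
    linarith
  have hq1pos : (0:ℝ) < q ^ (n + 1) - 1 := by nlinarith
  rw [Real.norm_of_nonneg (div_nonneg (by positivity) (Dq_pos hq _).le),
    Real.norm_of_nonneg (div_nonneg (by positivity) (Dq_pos hq _).le)]
  have hD1 : Dq q (n + 1) = Dq q n * (q ^ (n + 1) - 1) := Finset.prod_range_succ _ _
  calc q ^ (2 * (n + 1)) / Dq q (n + 1)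
      = (q ^ (2 * n) / Dq q n) * (q ^ 2 / (q ^ (n + 1) - 1)) := by
        rw [hD1]; field_simp; ring
    _ ≤ (q ^ (2 * n) / Dq q n) * (1 / 2) := by
        have hle : q ^ 2 / (q ^ (n + 1) - 1) ≤ 1 / 2 := by
          rw [div_le_div_iff₀ hq1pos (by norm_num)]
          linarith
        exact mul_le_mul_of_nonneg_left hle (div_nonneg (by positivity) (Dq_pos hq _).le)
    _ = 1 / 2 * (q ^ (2 * n) / Dq q n) := mul_comm _ _

/-- The sequences `ν₊` and `ν₋` lie in `ℓ²(π_sym)` and are eigenvectors of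
`P_sym` with eigenvalues `q^{-1}` and `−q^{-1}` respectively. -/
theorem stmt19 (q : ℝ) (hq : 1 < q) :
    Summable (fun k : ℕ => nuPlus q k ^ 2 / piSym q k) ∧
    Summable (fun k : ℕ => nuMinus q k ^ 2 / piSym q k) ∧
    (∀ l : ℕ,
      (if l = 0 then 0 else nuPlus q (l - 1) * Psym q (l - 1) l)
        + nuPlus q l * Psym q l l + nuPlus q (l + 1) * Psym q (l + 1) l
      = q⁻¹ * nuPlus q l) ∧
    (∀ l : ℕ,
      (if l = 0 then 0 else nuMinus q (l - 1) * Psym q (l - 1) l)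
        + nuMinus q l * Psym q l l + nuMinus q (l + 1) * Psym q (l + 1) l
      = -q⁻¹ * nuMinus q l) := by
  have hq0 : (0:ℝ) < q := lt_trans one_pos hq
  have hqne : q ≠ 0 := ne_of_gt hq0
  have hDpos : ∀ k, 0 < Dq q k := Dq_pos hq
  have hDne : ∀ k, Dq q k ≠ 0 := fun k => (hDpos k).ne'
  have hpi : ∀ k, piSym q k = alphaQ q / Dq q k := fun k => rfl
  -- a generic cancellation lemma
  have hcancel : ∀ (k : ℕ) (g : ℝ),
      (piSym q k * g) ^ 2 / piSym q k = alphaQ q * (g ^ 2 / Dq q k) := by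
    intro k g
    rcases eq_or_ne (piSym q k) 0 with h | h
    · have ha : alphaQ q = 0 := by
        have := h; rw [hpi k, div_eq_zero_iff] at this
        tauto
      simp [h, ha]
    · have e : (piSym q k * g) ^ 2 = piSym q k * (piSym q k * g ^ 2) := by ring
      rw [e, mul_div_cancel_left₀ _ h, hpi k]
      ring
  refine ⟨?_, ?_, ?_, ?_⟩
  · have : (fun k : ℕ => nuPlus q k ^ 2 / piSym q k)
        = fun k => alphaQ q * ((1 - q ^ k / 2) ^ 2 / Dq q k) := by
      funext k; exact hcancel k _
    rw [this]
    apply Summable.mul_left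
    apply Summable.of_nonneg_of_le
      (fun k => div_nonneg (sq_nonneg _) (hDpos k).le) _ (summable_majorant hq)
    intro k
    have hk1 : (1:ℝ) ≤ q ^ k := one_le_pow₀ hq.le
    have hb : (1 - q ^ k / 2) ^ 2 ≤ q ^ (2 * k) := by
      have : q ^ (2 * k) = (q ^ k) ^ 2 := by rw [mul_comm, pow_mul]
      rw [this]
      apply sq_le_sq' <;> linarith
    gcongr
    exact (hDpos k).le
  · have : (fun k : ℕ => nuMinus q k ^ 2 / piSym q k)
        = fun k => alphaQ q * (((-q) ^ k) ^ 2 / Dq q k) := by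
      funext k; exact hcancel k _
    rw [this]
    apply Summable.mul_left
    have : (fun k : ℕ => ((-q) ^ k) ^ 2 / Dq q k) = fun k => q ^ (2 * k) / Dq q k := by
      funext k
      rw [← pow_mul, mul_comm k 2, pow_mul, neg_sq, ← pow_mul]
    rw [this]
    exact summable_majorant hq
  · intro l
    rcases l with _ | m
    · simp only [if_pos rfl, zero_add]
      have h1 : q - 1 ≠ 0 := by linarith
      simp only [nuPlus, piSym, Psym, Finset.prod_range_succ, Finset.prod_range_zero]
      norm_num
      field_simp
      ring
    · have hm : m + 1 ≠ 0 := Nat.succ_ne_zero m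
      simp only [if_neg hm, Nat.add_sub_cancel]
      have h1 : q ^ (m + 1) - 1 ≠ 0 := by
        have : (1:ℝ) < q ^ (m + 1) := one_lt_pow₀ hq (by omega); linarith
      have h2 : q ^ (m + 2) - 1 ≠ 0 := by
        have : (1:ℝ) < q ^ (m + 2) := one_lt_pow₀ hq (by omega); linarith
      simp only [nuPlus, piSym, Psym, Finset.prod_range_succ]
      norm_num
      have hne : Dq q m ≠ 0 := hDne m
      rw [Dq] at hne
      field_simp
      ring
  · intro l
    rcases l with _ | m
    · simp only [if_pos rfl, zero_add]
      have h1 : q - 1 ≠ 0 := by linarith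
      simp only [nuMinus, piSym, Psym, Finset.prod_range_succ, Finset.prod_range_zero]
      norm_num
      field_simp
      ring
    · have hm : m + 1 ≠ 0 := Nat.succ_ne_zero m
      simp only [if_neg hm, Nat.add_sub_cancel]
      have h1 : q ^ (m + 1) - 1 ≠ 0 := by
        have : (1:ℝ) < q ^ (m + 1) := one_lt_pow₀ hq (by omega); linarith
      have h2 : q ^ (m + 2) - 1 ≠ 0 := by
        have : (1:ℝ) < q ^ (m + 2) := one_lt_pow₀ hq (by omega); linarith
      simp only [nuMinus, piSym, Psym, Finset.prod_range_succ]
      norm_num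
      have hne : Dq q m ≠ 0 := hDne m
      rw [Dq] at hne
      field_simp
      ring
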